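/- Let a < b be coprime positive integers, let 0 ≤ i < k < m ≤ b, and set t = b − m. Then the pair {im, km} is an edge of the obstruction graph OG(a,b) if and only if the translated pair {(i+t)b, (k+t)b} is an edge of OG(a,b). (In other words, the component of OG(a,b) consisting of edges with common larger endpoint m is obtained from the component with common larger endpoint b by translating all boundary points down by b − m.) -/
import Mathlib


/-- `S(a,b) = { ⌊ib/a⌋ : i = 1, …, a-1 }`. -/
def Sab (a b : ℕ) : Finset ℕ := (Finset.Icc 1 (a - 1)).image (fun i => i * b / a)

/-- A diagonal of the polygon `P_{b+1}` with boundary points `0, 1, …, b`: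
a pair `i < j` with `j - i ≥ 2` and `(i, j) ≠ (0, b)`. -/
def IsDiagonal (b i j : ℕ) : Prop := i + 2 ≤ j ∧ j ≤ b ∧ ¬(i = 0 ∧ j = b)

/-- A diagonal `ij` is `a,b`-admissible if it separates `j - i - 1` and `b - j + i`
boundary points, both of which lie in `S(a,b)`. -/
def Admissible (a b : ℕ) (d : ℕ × ℕ) : Prop :=
  IsDiagonal b d.1 d.2 ∧ d.2 - d.1 - 1 ∈ Sab a b ∧ b - d.2 + d.1 ∈ Sab a b

/-- Two diagonals `ij` and `km` cross if `i < k < j < m` or `k < i < m < j`. -/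
def Crosses (d d' : ℕ × ℕ) : Prop :=
  (d.1 < d'.1 ∧ d'.1 < d.2 ∧ d.2 < d'.2) ∨ (d'.1 < d.1 ∧ d.1 < d'.2 ∧ d'.2 < d.2)

/-- An `a,b`-Dyck path: a north/east lattice path from `(0,0)` to `(b,a)` staying weakly
above `y = (a/b) x`.  It is encoded by the height `h u` of its unique east step over the
column interval `[u, u+1]`, for `0 ≤ u < b`; we normalize `h u = a` for `u ≥ b`. -/
structure DyckPath (a b : ℕ) where
  h : ℕ → ℕ
  mono : Monotone h
  norm : ∀ x, b ≤ x → h x = a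
  above : ∀ x, x < b → a * (x + 1) ≤ b * h x

/-- The lattice point `(x, y)` lies on `D` at the bottom of a north step of `D`. -/
def BottomNorth (a b : ℕ) (D : DyckPath a b) (x y : ℕ) : Prop :=
  x ≤ b ∧ (if x = 0 then 0 else D.h (x - 1)) ≤ y ∧ y < D.h x

/-- The laser of slope `a/b` fired northeast from the lattice point `(x, y)` of `D` first
hits `D` in the interior of the east step whose right endpoint has `x`-coordinate `k`;
the associated laser diagonal is `d(P) = (x, k)`.  The laser passes strictly below the
right endpoint of every earlier east step and strictly above the one it hits. -/
def IsLaserDiag (a b : ℕ) (D : DyckPath a b) (x y k : ℕ) : Prop :=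
  x < k ∧ k ≤ b ∧ b * D.h (k - 1) < b * y + a * (k - x) ∧
    ∀ u, x ≤ u → u + 1 < k → b * y + a * (u + 1 - x) < b * D.h u

/-- `F(D)`: the set of laser diagonals `d(P)` of the lattice points `P ≠ (0,0)` at the
bottoms of north steps of `D`. -/
def FD (a b : ℕ) (D : DyckPath a b) : Set (ℕ × ℕ) :=
  { d | ∃ y, BottomNorth a b D d.1 y ∧ (d.1, y) ≠ (0, 0) ∧ IsLaserDiag a b D d.1 y d.2 }

/-- A finite abstract simplicial complex on the ground set `E`: a downward closed
collection of finite subsets of `E`. -/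
structure AbsCplx (E : Type*) where
  faces : Set (Finset E)
  down : ∀ F ∈ faces, ∀ F' ⊆ F, F' ∈ faces

/-- The rational associahedron `Âss(a,b)`: faces are the sets of pairwise noncrossing
`a,b`-admissible diagonals. -/
def hatAss (a b : ℕ) : AbsCplx (ℕ × ℕ) where
  faces := { F | (∀ d ∈ F, Admissible a b d) ∧ ∀ d ∈ F, ∀ d' ∈ F, ¬Crosses d d' }
  down := fun F hF F' hsub =>
    ⟨fun d hd => hF.1 d (hsub hd), fun d hd d' hd' => hF.2 d (hsub hd) d' (hsub hd')⟩

/-- The rational associahedron `Ass(a,b)`: faces are the subsets of the sets `F(D)`,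
as `D` ranges over `a,b`-Dyck paths. -/
def Ass (a b : ℕ) : AbsCplx (ℕ × ℕ) where
  faces := { F | ∃ D : DyckPath a b, ∀ d ∈ F, d ∈ FD a b D }
  down := fun F hF F' hsub =>
    let ⟨D, hD⟩ := hF
    ⟨D, fun d hd => hD d (hsub hd)⟩

/-- Two distinct `a,b`-admissible diagonals `d, d'` form an edge of the obstruction graph
`OG(a,b)` exactly when `{d, d'}` is a face of `Âss(a,b)` but not of `Ass(a,b)`. -/
def OGEdge (a b : ℕ) (d d' : ℕ × ℕ) : Prop :=
  d ≠ d' ∧ ({d, d'} : Finset (ℕ × ℕ)) ∈ (hatAss a b).faces ∧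
    ({d, d'} : Finset (ℕ × ℕ)) ∉ (Ass a b).faces

set_option maxHeartbeats 1000000
set_option linter.unusedVariables false

lemma le_b_mul_ceil {b : ℕ} (hb : 0 < b) (x : ℕ) : x ≤ b * ((x + b - 1) / b) := by
  have h1 := Nat.div_add_mod (x + b - 1) b
  have h2 := Nat.mod_lt (x + b - 1) hb
  omega

lemma ceil_le_of {b x q : ℕ} (hb : 0 < b) (h : x ≤ b * q) : (x + b - 1) / b ≤ q := by
  rw [Nat.div_le_iff_le_mul_add_pred hb]
  omega

lemma forward_exists (a b m : ℕ) (hab : a < b) (hmb : m < b)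
    (D : DyckPath a b) (i y₁ : ℕ)
    (hBi : BottomNorth a b D i y₁) (hLi : IsLaserDiag a b D i y₁ m) :
    ∃ D' : DyckPath a b, ∀ x y, i ≤ x → BottomNorth a b D x y → IsLaserDiag a b D x y m →
      BottomNorth a b D' (x + (b - m)) (y + (a - D.h (m-1))) ∧
      IsLaserDiag a b D' (x + (b - m)) (y + (a - D.h (m-1))) b := by
  have hb : 0 < b := by omega
  obtain ⟨him, hmb', hend, hbelow⟩ := hLi
  obtain ⟨hib, hprev, hyh⟩ := hBi
  have ht1 : 1 ≤ b - m := by omega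
  have hitb : i + (b - m) < b := by omega
  have hHa : D.h (m-1) ≤ a := by
    have h1 : D.h (m-1) ≤ D.h b := D.mono (by omega)
    rw [D.norm b le_rfl] at h1; exact h1
  -- key inequality: for any point with a laser into the step ending at m
  have key : ∀ x y, x < m → b * D.h (m-1) < b * y + a * (m - x) →
      a * (x + (b - m)) < b * (y + (a - D.h (m-1))) := by
    intro x y hxm hendx
    zify [hHa, hxm.le, hmb.le] at *
    nlinarith [hendx]
  -- the new path
  refine ⟨⟨fun u => if u < i + (b - m) then (a*(u+1) + b - 1) / b
      else if u < b then D.h (u - (b - m)) + (a - D.h (m-1)) else a, ?_, ?_, ?_⟩, ?_⟩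
  · -- monotone
    apply monotone_nat_of_le_succ
    intro u
    by_cases h1 : u + 1 < i + (b - m)
    · simp only [if_pos (by omega : u < i + (b - m)), if_pos h1]
      refine Nat.div_le_div_right ?_
      have := Nat.mul_le_mul_left a (by omega : u + 1 ≤ u + 1 + 1)
      omega
    · by_cases h2 : u < i + (b - m)
      · -- u + 1 = i + (b-m)
        have hu1 : u + 1 = i + (b - m) := by omega
        simp only [if_pos h2, if_neg h1, if_pos (by omega : u + 1 < b)]
        have e2 : u + 1 - (b - m) = i := by omega
        rw [e2, hu1]
        apply ceil_le_of hb
        have hk := key i y₁ him hend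
        have h7 : b * (y₁ + (a - D.h (m-1))) ≤ b * (D.h i + (a - D.h (m-1))) :=
          Nat.mul_le_mul_left _ (by omega)
        omega
      · by_cases h3 : u + 1 < b
        · simp only [if_neg h1, if_neg h2, if_pos h3, if_pos (by omega : u < b)]
          have := D.mono (by omega : u - (b - m) ≤ u + 1 - (b - m))
          omega
        · by_cases h4 : u < b
          · simp only [if_neg h1, if_neg h2, if_neg h3, if_pos h4,
              if_neg (by omega : ¬ u + 1 < i + (b - m)), if_neg (by omega : ¬ u + 1 < b)]
            have e3 : u - (b - m) = m - 1 := by omega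
            rw [e3]; omega
          · simp only [if_neg h1, if_neg h2, if_neg h3, if_neg h4,
              if_neg (by omega : ¬ u + 1 < b)]
            exact le_rfl
  · -- norm
    intro x hx
    simp only [if_neg (by omega : ¬ x < i + (b - m)), if_neg (by omega : ¬ x < b)]
  · -- above the line
    intro u hub
    by_cases h1 : u < i + (b - m)
    · simp only [if_pos h1]
      exact le_b_mul_ceil hb (a*(u+1))
    · simp only [if_neg h1, if_pos hub]
      obtain ⟨v, rfl⟩ : ∃ v, u = v + (b - m) := ⟨u - (b - m), by omega⟩
      have e4 : v + (b - m) - (b - m) = v := by omega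
      rw [e4]
      by_cases hv : v = m - 1
      · subst hv
        have e5 : m - 1 + (b - m) + 1 = b := by omega
        rw [e5]
        have h6 : D.h (m-1) + (a - D.h (m-1)) = a := by omega
        rw [h6, mul_comm]
      · have hvm : v + 1 < m := by omega
        have hb1 := hbelow v (by omega) hvm
        zify [hHa, hmb.le, him.le, (by omega : i ≤ v + 1), (by omega : v + 1 ≤ m)] at *
        nlinarith [hend, hb1]
  · -- main: translating points
    intro x y hix hBx hLx
    obtain ⟨hxm, hxm', hendx, hbelx⟩ := hLx
    obtain ⟨hxb, hprevx, hyx⟩ := hBx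
    have hkx := key x y hxm hendx
    have hxtb : x + (b - m) < b := by omega
    refine ⟨⟨by omega, ?_, ?_⟩, ⟨by omega, le_rfl, ?_, ?_⟩⟩
    · -- previous height ≤ y + δ
      rw [if_neg (by omega : ¬ x + (b - m) = 0)]
      rcases eq_or_lt_of_le hix with heq | hlt
      · simp only [if_pos (show x + (b - m) - 1 < i + (b - m) by omega)]
        have e6 : x + (b - m) - 1 + 1 = x + (b - m) := by omega
        rw [e6]
        exact ceil_le_of hb hkx.le
      · simp only [if_neg (show ¬ x + (b - m) - 1 < i + (b - m) by omega),
          if_pos (show x + (b - m) - 1 < b by omega)]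
        have e7 : x + (b - m) - 1 - (b - m) = x - 1 := by omega
        rw [e7]
        rw [if_neg (by omega : ¬ x = 0)] at hprevx
        omega
    · -- y + δ < new height at x + (b-m)
      simp only [if_neg (by omega : ¬ x + (b - m) < i + (b - m)), if_pos hxtb]
      have e8 : x + (b - m) - (b - m) = x := by omega
      rw [e8]; omega
    · -- laser endpoint at b
      simp only [if_neg (by omega : ¬ b - 1 < i + (b - m)), if_pos (by omega : b - 1 < b)]
      have e9 : b - 1 - (b - m) = m - 1 := by omega
      rw [e9]
      have e10 : b - (x + (b - m)) = m - x := by omega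
      rw [e10]
      zify [hHa, hxm.le] at *
      nlinarith [hendx]
    · -- laser strictly below earlier steps
      intro u hu1 hu2
      simp only [if_neg (by omega : ¬ u < i + (b - m)), if_pos (by omega : u < b)]
      obtain ⟨v, rfl⟩ : ∃ v, u = v + (b - m) := ⟨u - (b - m), by omega⟩
      have e11 : v + (b - m) - (b - m) = v := by omega
      have e12 : v + (b - m) + 1 - (x + (b - m)) = v + 1 - x := by omega
      rw [e11, e12]
      have hbv := hbelx v (by omega) (by omega)
      zify [hHa, (by omega : x ≤ v + 1)] at *
      nlinarith [hbv]

lemma backward_exists (a b m : ℕ) (ha : 0 < a) (hab : a < b)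
    (hcop : Nat.Coprime a b) (hm0 : 0 < m) (hmb : m < b) (D : DyckPath a b) :
    ∃ D' : DyckPath a b, ∀ x y, x < m →
      BottomNorth a b D (x + (b - m)) y → IsLaserDiag a b D (x + (b - m)) y b →
      BottomNorth a b D' x (y - a * (b - m) / b) ∧
      ((x, y - a * (b - m) / b) ≠ ((0 : ℕ), (0 : ℕ))) ∧
      IsLaserDiag a b D' x (y - a * (b - m) / b) m := by
  have hb : 0 < b := by omega
  have ht1 : 1 ≤ b - m := by omega
  have htb : b - m < b := by omega
  have hδt : b * (a * (b - m) / b) ≤ a * (b - m) := by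
    rw [mul_comm]; exact Nat.div_mul_le_self _ _
  -- δ' is at most any relevant height of D
  have hδh : ∀ w, b - m ≤ w + 1 → a * (b - m) / b ≤ D.h w := by
    intro w hw
    by_cases hwb : w < b
    · have h1 := D.above w hwb
      have h2 : a * (b - m) ≤ a * (w + 1) := Nat.mul_le_mul_left a hw
      have h3 : b * (a * (b - m) / b) ≤ b * D.h w := by omega
      exact Nat.le_of_mul_le_mul_left h3 hb
    · rw [D.norm w (by omega)]
      have h2 : a * (b - m) ≤ a * b := Nat.mul_le_mul_left a (by omega)
      have h3 : a * b = b * a := mul_comm a b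
      have h4 : b * (a * (b - m) / b) ≤ b * a := by omega
      exact Nat.le_of_mul_le_mul_left h4 hb
  -- strict bound at w = b - m - 1 using coprimality
  have hstrict : a * (b - m) / b < D.h (b - m - 1) := by
    have h1 := D.above (b - m - 1) (by omega)
    have e1 : b - m - 1 + 1 = b - m := by omega
    rw [e1] at h1
    have hne : a * (b - m) ≠ b * D.h (b - m - 1) := by
      intro hdvd
      have : b ∣ a * (b - m) := ⟨D.h (b - m - 1), hdvd⟩
      have : b ∣ (b - m) := Nat.Coprime.dvd_of_dvd_mul_left hcop.symm this
      have := Nat.le_of_dvd (by omega) this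
      omega
    have h5 : b * (a * (b - m) / b) < b * D.h (b - m - 1) := by omega
    exact Nat.lt_of_mul_lt_mul_left h5
  have hhb1 : D.h (b - 1) ≤ a := by
    have h1 : D.h (b - 1) ≤ D.h b := D.mono (by omega)
    rw [D.norm b le_rfl] at h1; exact h1
  refine ⟨⟨fun u => if u < m then D.h (u + (b - m)) - a * (b - m) / b else a, ?_, ?_, ?_⟩, ?_⟩
  · -- monotone
    apply monotone_nat_of_le_succ
    intro u
    by_cases h1 : u + 1 < m
    · simp only [if_pos (by omega : u < m), if_pos h1]
      have := D.mono (by omega : u + (b - m) ≤ u + 1 + (b - m))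
      omega
    · by_cases h2 : u < m
      · simp only [if_pos h2, if_neg h1]
        have h3 : D.h (u + (b - m)) ≤ D.h b := D.mono (by omega)
        rw [D.norm b le_rfl] at h3
        exact le_trans (Nat.sub_le _ _) h3
      · simp only [if_neg h1, if_neg h2]
        exact le_rfl
  · -- norm
    intro x hx
    simp only [if_neg (by omega : ¬ x < m)]
  · -- above the line
    intro u hub
    by_cases h1 : u < m
    · simp only [if_pos h1]
      have h2 := D.above (u + (b - m)) (by omega)
      have h3 := hδh (u + (b - m)) (by omega)
      zify [h3, hmb.le] at *
      nlinarith [h2, hδt]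
    · simp only [if_neg h1]
      calc a * (u + 1) ≤ a * b := Nat.mul_le_mul_left a (by omega)
      _ = b * a := mul_comm a b
  · -- main
    intro x y hxm hBx hLx
    obtain ⟨hxlt, hbb, hendx, hbelx⟩ := hLx
    obtain ⟨hxtb, hprevx, hyx⟩ := hBx
    rw [if_neg (by omega : ¬ x + (b - m) = 0)] at hprevx
    have hδy : a * (b - m) / b ≤ y :=
      le_trans (hδh (x + (b - m) - 1) (by omega)) hprevx
    refine ⟨⟨by omega, ?_, ?_⟩, ?_, ⟨hxm, by omega, ?_, ?_⟩⟩
    · -- previous height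
      by_cases hx0 : x = 0
      · rw [if_pos hx0]; exact Nat.zero_le _
      · rw [if_neg hx0]
        simp only [if_pos (show x - 1 < m by omega)]
        have e2 : x - 1 + (b - m) = x + (b - m) - 1 := by omega
        rw [e2]
        omega
    · -- upper bound
      simp only [if_pos hxm]
      have h3 := hδh (x + (b - m)) (by omega)
      omega
    · -- not (0,0)
      by_cases hx0 : x = 0
      · subst hx0
        have e3 : 0 + (b - m) - 1 = b - m - 1 := by omega
        rw [e3] at hprevx
        simp only [ne_eq, Prod.mk.injEq, not_and]
        intro _
        omega
      · simp only [ne_eq, Prod.mk.injEq, not_and]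
        intro h; exact absurd h hx0
    · -- laser endpoint
      simp only [if_pos (show m - 1 < m by omega)]
      have e4 : m - 1 + (b - m) = b - 1 := by omega
      rw [e4]
      have e5 : b - (x + (b - m)) = m - x := by omega
      rw [e5] at hendx
      have h6 := hδh (b - 1) (by omega)
      zify [h6, hδy, hxm.le] at *
      linarith [hendx]
    · -- laser strictly below
      intro u hxu hum
      simp only [if_pos (show u < m by omega)]
      have hbu := hbelx (u + (b - m)) (by omega) (by omega)
      have e6 : u + (b - m) + 1 - (x + (b - m)) = u + 1 - x := by omega
      rw [e6] at hbu
      have h7 := hδh (u + (b - m)) (by omega)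
      zify [h7, hδy, (by omega : x ≤ u + 1)] at *
      linarith [hbu]

lemma not_crosses_same_snd {d d' : ℕ × ℕ} (h : d.2 = d'.2) : ¬ Crosses d d' := by
  unfold Crosses; omega

lemma fd_mem_iff (a b : ℕ) (D : DyckPath a b) (x j : ℕ) :
    (x, j) ∈ FD a b D ↔
      ∃ y, BottomNorth a b D x y ∧ ((x, y) ≠ ((0:ℕ), (0:ℕ))) ∧ IsLaserDiag a b D x y j :=
  Iff.rfl

lemma adm_transl (a b x m : ℕ) (hxm : x < m) (hmb : m ≤ b) :
    Admissible a b (x, m) ↔ Admissible a b (x + (b - m), b) := by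
  unfold Admissible IsDiagonal
  simp only
  rw [show m - x - 1 = b - (x + (b - m)) - 1 by omega,
      show b - m + x = b - b + (x + (b - m)) by omega]
  constructor
  · rintro ⟨h1, h4, h5⟩
    refine ⟨?_, h4, h5⟩
    simp only [and_true]
    omega
  · rintro ⟨h1, h4, h5⟩
    simp only [and_true] at h1
    exact ⟨by omega, h4, h5⟩

lemma ogedge_norm (a b i k m : ℕ) (hik : i < k) (hkm : k < m) (hmb : m ≤ b) :
    OGEdge a b (i, m) (k, m) ↔
      (Admissible a b (i, m) ∧ Admissible a b (k, m)) ∧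
        ¬ ∃ D : DyckPath a b, (i, m) ∈ FD a b D ∧ (k, m) ∈ FD a b D := by
  unfold OGEdge
  have hne : ((i, m) : ℕ × ℕ) ≠ (k, m) := by
    simp only [ne_eq, Prod.mk.injEq, not_and]; omega
  constructor
  · rintro ⟨-, hhat, hass⟩
    simp only [hatAss, Set.mem_setOf_eq, Finset.mem_insert, Finset.mem_singleton,
      forall_eq_or_imp, forall_eq] at hhat
    refine ⟨⟨hhat.1.1, hhat.1.2⟩, ?_⟩
    rintro ⟨D, h1, h2⟩
    exact hass ⟨D, by
      intro d hd
      simp only [Finset.mem_insert, Finset.mem_singleton] at hd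
      rcases hd with rfl | rfl
      · exact h1
      · exact h2⟩
  · rintro ⟨⟨ha1, ha2⟩, hnr⟩
    refine ⟨hne, ?_, ?_⟩
    · simp only [hatAss, Set.mem_setOf_eq, Finset.mem_insert, Finset.mem_singleton,
        forall_eq_or_imp, forall_eq]
      exact ⟨⟨ha1, ha2⟩, ⟨⟨not_crosses_same_snd rfl, not_crosses_same_snd rfl⟩,
        not_crosses_same_snd rfl, not_crosses_same_snd rfl⟩⟩
    · rintro ⟨D, hD⟩
      exact hnr ⟨D, hD (i, m) (by simp), hD (k, m) (by simp)⟩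

lemma real_transl (a b i k m : ℕ) (ha : 0 < a) (hab : a < b) (hcop : Nat.Coprime a b)
    (hik : i < k) (hkm : k < m) (hmb : m < b) :
    (∃ D : DyckPath a b, (i, m) ∈ FD a b D ∧ (k, m) ∈ FD a b D) ↔
      (∃ D : DyckPath a b, (i + (b - m), b) ∈ FD a b D ∧ (k + (b - m), b) ∈ FD a b D) := by
  constructor
  · rintro ⟨D, hi, hk⟩
    rw [fd_mem_iff] at hi hk
    obtain ⟨y₁, hB1, hne1, hL1⟩ := hi
    obtain ⟨y₂, hB2, hne2, hL2⟩ := hk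
    obtain ⟨D', hmain⟩ := forward_exists a b m hab hmb D i y₁ hB1 hL1
    obtain ⟨hb1, hl1⟩ := hmain i y₁ le_rfl hB1 hL1
    obtain ⟨hb2, hl2⟩ := hmain k y₂ hik.le hB2 hL2
    refine ⟨D', ?_, ?_⟩
    · rw [fd_mem_iff]
      exact ⟨y₁ + (a - D.h (m-1)), hb1, by
        simp only [ne_eq, Prod.mk.injEq, not_and]; omega, hl1⟩
    · rw [fd_mem_iff]
      exact ⟨y₂ + (a - D.h (m-1)), hb2, by
        simp only [ne_eq, Prod.mk.injEq, not_and]; omega, hl2⟩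
  · rintro ⟨D, hi, hk⟩
    rw [fd_mem_iff] at hi hk
    obtain ⟨y₁, hB1, hne1, hL1⟩ := hi
    obtain ⟨y₂, hB2, hne2, hL2⟩ := hk
    obtain ⟨D', hmain⟩ := backward_exists a b m ha hab hcop (by omega) hmb D
    obtain ⟨hb1, hn1, hl1⟩ := hmain i y₁ (by omega) hB1 hL1
    obtain ⟨hb2, hn2, hl2⟩ := hmain k y₂ hkm hB2 hL2
    exact ⟨D', ⟨y₁ - a * (b - m) / b, hb1, hn1, hl1⟩, ⟨y₂ - a * (b - m) / b, hb2, hn2, hl2⟩⟩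



/-- For `0 ≤ i < k < m ≤ b` and `t = b - m`, the pair `{im, km}` is an edge of
`OG(a,b)` if and only if the translated pair `{(i+t)b, (k+t)b}` is an edge of
`OG(a,b)`. -/
theorem OGEdge_translation (a b i k m : ℕ) (ha : 0 < a) (hab : a < b)
    (hcop : Nat.Coprime a b) (hik : i < k) (hkm : k < m) (hmb : m ≤ b) :
    OGEdge a b (i, m) (k, m) ↔ OGEdge a b (i + (b - m), b) (k + (b - m), b) := by
  rcases eq_or_lt_of_le hmb with rfl | hmb'
  · simp only [Nat.sub_self, Nat.add_zero]
  · rw [ogedge_norm a b i k m hik hkm hmb,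
      ogedge_norm a b (i + (b - m)) (k + (b - m)) b (by omega) (by omega) le_rfl]
    rw [adm_transl a b i m (by omega) hmb, adm_transl a b k m hkm hmb]
    rw [real_transl a b i k m ha hab hcop hik hkm hmb']
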